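/- arXiv:2105.06675 — 3 statements merged into one kernel-verified Lean document; each statement's English description precedes it below -/
import Mathlib

section
/- Let D be a 3-dimensional non-isotropic subspace of ℂ⁶ and set ℓ := D ∩ D^⊥ (a line). If L is a Lagrangian subspace of ℂ⁶ with dim(L ∩ D) = 2, then ℓ ⊆ L ⊆ ℓ^⊥. -/
open scoped Matrix

noncomputable section

/-- The matrix of the standard symplectic form on `ℂ⁶`:
`J = [[0, I₃], [-I₃, 0]]`, so that `ω(eᵢ, e_{i+3}) = 1` for `i = 1, 2, 3`. -/
def J : Matrix (Fin 6) (Fin 6) ℂ :=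
  Matrix.of fun i j => if (i : ℕ) + 3 = (j : ℕ) then 1 else if (j : ℕ) + 3 = (i : ℕ) then -1 else 0

/-- The standard symplectic form `ω(u, v) = uᵀ J v` on `ℂ⁶`. -/
def omg (u v : Fin 6 → ℂ) : ℂ := ∑ i, ∑ j, u i * J i j * v j

/-- The symplectic orthogonal `D^⊥ = {u ∈ ℂ⁶ : ω(d, u) = 0 for all d ∈ D}` of a
subspace `D ⊆ ℂ⁶`. -/
def sorth (D : Submodule ℂ (Fin 6 → ℂ)) : Submodule ℂ (Fin 6 → ℂ) where
  carrier := {u | ∀ d ∈ D, omg d u = 0}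
  zero_mem' := by
    intro d _
    simp [omg]
  add_mem' := by
    intro a b ha hb d hd
    have h : omg d (a + b) = omg d a + omg d b := by
      simp only [omg, Pi.add_apply, mul_add]
      rw [← Finset.sum_add_distrib]
      exact Finset.sum_congr rfl fun i _ => by rw [← Finset.sum_add_distrib]
    simp only [Set.mem_setOf_eq] at *
    rw [h, ha d hd, hb d hd, add_zero]
  smul_mem' := by
    intro c a ha d hd
    have h : omg d (c • a) = c * omg d a := by
      simp only [omg, Pi.smul_apply, smul_eq_mul, Finset.mul_sum]
      exact Finset.sum_congr rfl fun i _ => Finset.sum_congr rfl fun j _ => by ring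
    simp only [Set.mem_setOf_eq] at *
    rw [h, ha d hd, mul_zero]

/-- A subspace of `ℂ⁶` is isotropic if `ω` vanishes identically on it. -/
def IsIsotropic (S : Submodule ℂ (Fin 6 → ℂ)) : Prop :=
  ∀ u ∈ S, ∀ v ∈ S, omg u v = 0

/-- A subspace of `ℂ⁶` is Lagrangian if it is isotropic of dimension `3`. -/
def IsLagrangian (S : Submodule ℂ (Fin 6 → ℂ)) : Prop :=
  IsIsotropic S ∧ Module.finrank ℂ S = 3


lemma Jskew (i j : Fin 6) : J j i = - J i j := by
  simp only [J, Matrix.of_apply]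
  by_cases h1 : (i : ℕ) + 3 = (j : ℕ) <;> by_cases h2 : (j : ℕ) + 3 = (i : ℕ) <;>
    simp [h1, h2] <;> omega

lemma omg_skew (u v : Fin 6 → ℂ) : omg v u = - omg u v := by
  unfold omg
  rw [Finset.sum_comm, ← Finset.sum_neg_distrib]
  refine Finset.sum_congr rfl fun i _ => ?_
  rw [← Finset.sum_neg_distrib]
  refine Finset.sum_congr rfl fun j _ => ?_
  rw [Jskew]; ring

lemma omg_add_left (a b v : Fin 6 → ℂ) : omg (a + b) v = omg a v + omg b v := by
  simp [omg, add_mul, Finset.sum_add_distrib]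

lemma omg_add_right (u a b : Fin 6 → ℂ) : omg u (a + b) = omg u a + omg u b := by
  simp [omg, mul_add, Finset.sum_add_distrib]

lemma omg_smul_left (c : ℂ) (a v : Fin 6 → ℂ) : omg (c • a) v = c * omg a v := by
  simp only [omg, Pi.smul_apply, smul_eq_mul, Finset.mul_sum]
  exact Finset.sum_congr rfl fun i _ => Finset.sum_congr rfl fun j _ => by ring

lemma omg_smul_right (c : ℂ) (u a : Fin 6 → ℂ) : omg u (c • a) = c * omg u a := by
  simp only [omg, Pi.smul_apply, smul_eq_mul, Finset.mul_sum]
  exact Finset.sum_congr rfl fun i _ => Finset.sum_congr rfl fun j _ => by ring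

/-- Let `D` be a `3`-dimensional non-isotropic subspace of `ℂ⁶` and set
`ℓ := D ∩ D^⊥` (a line).  If `L` is a Lagrangian subspace of `ℂ⁶` with
`dim (L ∩ D) = 2`, then `ℓ ⊆ L ⊆ ℓ^⊥`. -/
theorem statement_4 (D : Submodule ℂ (Fin 6 → ℂ))
    (hD : Module.finrank ℂ D = 3) (hiso : ¬ IsIsotropic D)
    (L : Submodule ℂ (Fin 6 → ℂ)) (hL : IsLagrangian L)
    (hLD : Module.finrank ℂ ↥(L ⊓ D) = 2) :
    D ⊓ sorth D ≤ L ∧ L ≤ sorth (D ⊓ sorth D) := by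
  have key : D ⊓ sorth D ≤ L := by
    intro x hx
    obtain ⟨hxD, hxS⟩ := hx
    by_contra hxL
    apply hiso
    have hxS' : ∀ d ∈ D, omg d x = 0 := hxS
    set N := (L ⊓ D) ⊔ (ℂ ∙ x) with hN
    have hNle : N ≤ D :=
      sup_le inf_le_right ((Submodule.span_singleton_le_iff_mem x D).mpr hxD)
    have hlt : (L ⊓ D) < N := by
      refine lt_of_le_of_ne le_sup_left ?_
      intro h
      have hxN : x ∈ N := (le_sup_right : (ℂ ∙ x) ≤ N) (Submodule.mem_span_singleton_self x)
      rw [← h] at hxN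
      exact hxL hxN.1
    have h3 : 3 ≤ Module.finrank ℂ N := by
      have := Submodule.finrank_lt_finrank_of_lt hlt
      omega
    have hND : N = D := Submodule.eq_of_le_of_finrank_le hNle (by omega)
    intro u hu v hv
    rw [← hND] at hu hv
    obtain ⟨m, hm, y, hy, rfl⟩ := Submodule.mem_sup.mp hu
    obtain ⟨m', hm', y', hy', rfl⟩ := Submodule.mem_sup.mp hv
    obtain ⟨c, rfl⟩ := Submodule.mem_span_singleton.mp hy
    obtain ⟨c', rfl⟩ := Submodule.mem_span_singleton.mp hy'
    have h1 : omg m m' = 0 := hL.1 m hm.1 m' hm'.1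
    have h2 : omg m x = 0 := hxS' m hm.2
    have h3' : omg m' x = 0 := hxS' m' hm'.2
    have h4 : omg x x = 0 := hxS' x hxD
    have h5 : omg x m' = 0 := by rw [omg_skew m' x, h3', neg_zero]
    simp [omg_add_left, omg_add_right, omg_smul_left, omg_smul_right,
      h1, h2, h3', h4, h5]
  refine ⟨key, fun u hu => ?_⟩
  intro d hd
  exact hL.1 d (key hd) u hu
end
end

section
/- For a ∈ ℂ⁶, let η_a be the totally antisymmetric array η_a(i,j,k) := a_i·J(j,k) + a_j·J(k,i) + a_k·J(i,j), encoding the 3-form α ∧ ω, where α = Σ a_i x^i. Then q(η_a)(b,c) = 4·a_b·a_c for all b, c ∈ {1,…,6}; in particular, for a ≠ 0 the KLR contraction of α ∧ ω is a rank-one symmetric matrix proportional to the square of α. -/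
open scoped Matrix

noncomputable section

/-- The matrix `W = -J`, so `W(i, i+3) = -1` and `W(i+3, i) = 1` for `i = 1, 2, 3`. -/
def W : Matrix (Fin 6) (Fin 6) ℂ := -J

/-- A totally antisymmetric array `η : {1,…,6}³ → ℂ`: it changes sign under the
transposition of any two of its three arguments. -/
def IsAlt (η : Fin 6 → Fin 6 → Fin 6 → ℂ) : Prop :=
  (∀ i j k, η j i k = -η i j k) ∧ (∀ i j k, η i k j = -η i j k) ∧
    (∀ i j k, η k j i = -η i j k)

/-- An array `η` is effective if `Σ_{i,j} W(i,j) · η(i,j,k) = 0` for every `k`. -/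
def IsEff (η : Fin 6 → Fin 6 → Fin 6 → ℂ) : Prop :=
  ∀ k, (∑ i, ∑ j, W i j * η i j k) = 0

/-- The KLR contraction of a `3`-form `η`: the symmetric `6 × 6` matrix with entries
`q(η)(a,b) = Σ_{i,j,h,k} η(a,i,j) · η(b,h,k) · W(i,h) · W(j,k)`. -/
def klr (η : Fin 6 → Fin 6 → Fin 6 → ℂ) : Matrix (Fin 6) (Fin 6) ℂ :=
  Matrix.of fun a b => ∑ i, ∑ j, ∑ h, ∑ k, η a i j * η b h k * W i h * W j k

/-- The array `η_a(i,j,k) = a_i · J(j,k) + a_j · J(k,i) + a_k · J(i,j)`, encoding the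
3-form `α ∧ ω` where `α = Σ a_i x^i`. -/
def etaWedge (a : Fin 6 → ℂ) : Fin 6 → Fin 6 → Fin 6 → ℂ :=
  fun i j k => a i * J j k + a j * J k i + a k * J i j

lemma valfacts : ((0:Fin 6):ℕ) = 0 ∧ ((1:Fin 6):ℕ) = 1 ∧ ((2:Fin 6):ℕ) = 2 ∧
    ((3:Fin 6):ℕ) = 3 ∧ ((4:Fin 6):ℕ) = 4 ∧ ((5:Fin 6):ℕ) = 5 := by decide

lemma contractW (f : Fin 6 → Fin 6 → ℂ) :
    ∑ i, ∑ j, f i j * W i j = f 3 0 + f 4 1 + f 5 2 - f 0 3 - f 1 4 - f 2 5 := by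
  simp only [Fin.sum_univ_six, W, J, Matrix.neg_apply, Matrix.of_apply,
    valfacts.1, valfacts.2.1, valfacts.2.2.1, valfacts.2.2.2.1, valfacts.2.2.2.2.1,
    valfacts.2.2.2.2.2]
  norm_num
  ring

lemma klr_eq (η : Fin 6 → Fin 6 → Fin 6 → ℂ) (b c : Fin 6) :
    klr η b c = ∑ i, ∑ h, (∑ j, ∑ k, (η b i j * η c h k) * W j k) * W i h := by
  simp only [klr, Matrix.of_apply]
  refine Finset.sum_congr rfl fun i _ => ?_
  rw [Finset.sum_comm]
  refine Finset.sum_congr rfl fun h _ => ?_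
  rw [Finset.sum_mul]
  refine Finset.sum_congr rfl fun j _ => ?_
  rw [Finset.sum_mul]
  refine Finset.sum_congr rfl fun k _ => ?_
  ring

lemma mk2' (h : 2 < 6) : (⟨2, h⟩ : Fin 6) = 2 := rfl
lemma mk3' (h : 3 < 6) : (⟨3, h⟩ : Fin 6) = 3 := rfl
lemma mk4' (h : 4 < 6) : (⟨4, h⟩ : Fin 6) = 4 := rfl
lemma mk5' (h : 5 < 6) : (⟨5, h⟩ : Fin 6) = 5 := rfl

set_option maxHeartbeats 1000000 in
lemma klr_etaWedge_apply (a : Fin 6 → ℂ) (b c : Fin 6) :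
    klr (etaWedge a) b c = 4 * a b * a c := by
  rw [klr_eq]
  fin_cases b <;> fin_cases c <;>
  · simp only [contractW, etaWedge, J, Matrix.of_apply, Fin.val_mk, Fin.mk_zero, Fin.mk_one,
      mk2', mk3', mk4', mk5',
      valfacts.1, valfacts.2.1, valfacts.2.2.1, valfacts.2.2.2.1, valfacts.2.2.2.2.1,
      valfacts.2.2.2.2.2]
    norm_num
    ring

/-- For the 3-form `α ∧ ω` one has `q(η_a)(b,c) = 4 · a_b · a_c`; in particular, for
`a ≠ 0` the KLR contraction of `α ∧ ω` is a rank-one symmetric matrix proportional to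
the square of `α`. -/
theorem statement_14 :
    (∀ a : Fin 6 → ℂ, ∀ b c : Fin 6, klr (etaWedge a) b c = 4 * a b * a c) ∧
    (∀ a : Fin 6 → ℂ, a ≠ 0 → (klr (etaWedge a)).rank = 1) := by
  refine ⟨klr_etaWedge_apply, fun a ha => ?_⟩
  have hM : klr (etaWedge a) = Matrix.vecMulVec (fun i => 2 * a i) (fun i => 2 * a i) := by
    ext b c
    rw [klr_etaWedge_apply, Matrix.vecMulVec_apply]
    ring
  obtain ⟨b, hb⟩ : ∃ b, a b ≠ 0 := by
    by_contra h
    push_neg at h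
    exact ha (funext h)
  refine le_antisymm ?_ ?_
  · rw [hM, Matrix.vecMulVec_eq (Fin 1)]
    exact le_trans (Matrix.rank_mul_le_left _ _)
      (le_trans (Matrix.rank_le_card_width _) (by simp))
  · rw [Nat.one_le_iff_ne_zero]
    intro h0
    rw [Matrix.rank] at h0
    have hbot := Submodule.finrank_eq_zero.mp h0
    have hmem : (klr (etaWedge a)).mulVecLin (Pi.single b 1) ∈
        LinearMap.range (klr (etaWedge a)).mulVecLin := LinearMap.mem_range_self _ _
    rw [hbot, Submodule.mem_bot] at hmem
    have h3 := congrFun hmem b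
    rw [Matrix.mulVecLin_apply, Matrix.mulVec_single] at h3
    simp only [Pi.smul_apply, MulOpposite.op_one, one_smul, Matrix.col_apply, mul_one, Pi.zero_apply, klr_etaWedge_apply] at h3
    have : (4 : ℂ) * a b * a b ≠ 0 := by
      simp [hb]
    exact this h3
end
end

section
/- If v₁, v₂, v₃ ∈ ℂ⁶ span an isotropic subspace (ω(v_m, v_n) = 0 for all m, n ∈ {1,2,3}), then their Plücker array η is effective and satisfies q(η) = 0. (Hence the cone over the Lagrangian Grassmannian LG(3,6), in its Plücker embedding into the space of effective 3-forms, is contained in the zero locus of the moment map.) -/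
open scoped Matrix

noncomputable section

/-- The Plücker array of vectors `v₁, v₂, v₃ ∈ ℂ⁶`: its `(i,j,k)` entry is the
determinant of the `3 × 3` matrix whose `m`-th row is `((v_m)_i, (v_m)_j, (v_m)_k)`. -/
def plk (v : Fin 3 → Fin 6 → ℂ) : Fin 6 → Fin 6 → Fin 6 → ℂ :=
  fun i j k => Matrix.det (Matrix.of fun m n => v m (![i, j, k] n))


lemma fv0' : ((0 : Fin 6) : ℕ) = 0 := rfl
lemma fv1' : ((1 : Fin 6) : ℕ) = 1 := rfl
lemma fv2' : ((2 : Fin 6) : ℕ) = 2 := rfl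
lemma fv3' : ((3 : Fin 6) : ℕ) = 3 := rfl
lemma fv4' : ((4 : Fin 6) : ℕ) = 4 := rfl
lemma fv5' : ((5 : Fin 6) : ℕ) = 5 := rfl

lemma plk_eq' (v : Fin 3 → Fin 6 → ℂ) (i j k : Fin 6) :
    plk v i j k = v 0 i * (v 1 j * v 2 k - v 1 k * v 2 j)
      - v 0 j * (v 1 i * v 2 k - v 1 k * v 2 i)
      + v 0 k * (v 1 i * v 2 j - v 1 j * v 2 i) := by
  simp [plk, Matrix.det_fin_three]; ring

lemma omg_eq' (u w : Fin 6 → ℂ) :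
    omg u w = u 0 * w 3 + u 1 * w 4 + u 2 * w 5 - u 3 * w 0 - u 4 * w 1 - u 5 * w 2 := by
  simp only [omg, J, Fin.sum_univ_six, Matrix.of_apply, fv0', fv1', fv2', fv3', fv4', fv5']
  norm_num; ring

set_option maxHeartbeats 1000000 in
lemma eff_key' (v : Fin 3 → Fin 6 → ℂ) (k : Fin 6) :
    (∑ i, ∑ j, W i j * plk v i j k)
      = -2 * omg (v 0) (v 1) * v 2 k + 2 * omg (v 0) (v 2) * v 1 k
        - 2 * omg (v 1) (v 2) * v 0 k := by
  simp only [Fin.sum_univ_six, plk_eq', omg_eq', W, J, Matrix.neg_apply, Matrix.of_apply,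
    fv0', fv1', fv2', fv3', fv4', fv5']
  norm_num; ring

set_option maxHeartbeats 4000000 in
lemma klr_key' (v : Fin 3 → Fin 6 → ℂ) (a b : Fin 6) :
    klr (plk v) a b
      = 2 * (omg (v 0) (v 1) * v 2 a - omg (v 0) (v 2) * v 1 a + omg (v 1) (v 2) * v 0 a)
          * (omg (v 0) (v 1) * v 2 b - omg (v 0) (v 2) * v 1 b + omg (v 1) (v 2) * v 0 b) := by
  simp only [klr, Matrix.of_apply, Fin.sum_univ_six, W, J, Matrix.neg_apply,
    fv0', fv1', fv2', fv3', fv4', fv5']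
  norm_num
  simp only [plk_eq', omg_eq']
  ring

/-- If `v₁, v₂, v₃ ∈ ℂ⁶` span an isotropic subspace, their Plücker array `η` is
effective and satisfies `q(η) = 0`: the cone over the Lagrangian Grassmannian
`LG(3,6)`, in its Plücker embedding into the space of effective 3-forms, is
contained in the zero locus of the moment map. -/
theorem statement_15 (v : Fin 3 → Fin 6 → ℂ)
    (hv : ∀ m n : Fin 3, omg (v m) (v n) = 0) :
    IsAlt (plk v) ∧ IsEff (plk v) ∧ klr (plk v) = 0 := by
  refine ⟨⟨fun i j k => ?_, fun i j k => ?_, fun i j k => ?_⟩, fun k => ?_, ?_⟩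
  · simp only [plk_eq']; ring
  · simp only [plk_eq']; ring
  · simp only [plk_eq']; ring
  · rw [eff_key', hv 0 1, hv 0 2, hv 1 2]; ring
  · ext a b
    rw [klr_key', hv 0 1, hv 0 2, hv 1 2]
    simp
end
end
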